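/- Let i ≥ 0 and let x ≥ 2^(i+1) be a natural number with x ≡ 2^i (mod 2^(i+1)). If 0 ≤ k ≤ 2^i and the binary expansion of x − 2k contains that of 2^i − k (meaning every binary digit of 2^i − k is either 0 or equal to the corresponding digit of x − 2k), then k = 0 or k = 2^i. -/

import Mathlib

/-- If `x ≥ 2^(i+1)`, `x ≡ 2^i (mod 2^(i+1))`, `k ≤ 2^i` and the binary
expansion of `x - 2k` contains that of `2^i - k` (bitwise AND), then `k = 0` or `k = 2^i`. -/
theorem stmt3 (i x K : ℕ) (hx : 2 ^ (i + 1) ≤ x) (hmod : x % 2 ^ (i + 1) = 2 ^ i)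
    (hK : K ≤ 2 ^ i) (hcont : (2 ^ i - K) &&& (x - 2 * K) = 2 ^ i - K) :
    K = 0 ∨ K = 2 ^ i := by
  set m := 2 ^ i - K with hm
  by_cases hm0 : m = 0
  · right; omega
  by_cases hmi : m = 2 ^ i
  · left; omega
  · exfalso
    -- t = 2-adic valuation of m
    set t := m.factorization 2 with ht
    have hdvd : 2 ^ t ∣ m := Nat.ordProj_dvd m 2
    have hndvd : ¬ 2 ^ (t + 1) ∣ m := Nat.pow_succ_factorization_not_dvd hm0 Nat.prime_two
    have hmlt : m < 2 ^ i := by omega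
    have htlt : t < i := by
      by_contra h
      have : 2 ^ i ≤ 2 ^ t := Nat.pow_le_pow_right (by norm_num) (by omega)
      have := Nat.le_of_dvd (Nat.pos_of_ne_zero hm0) hdvd
      omega
    -- bit t of m is 1
    have hbm : m.testBit t = true := by
      rw [Nat.testBit_eq_decide_div_mod_eq]
      have hodd : ¬ 2 ∣ m / 2 ^ t := by
        intro h
        obtain ⟨c, hc⟩ := h
        refine hndvd ⟨c, ?_⟩
        rw [pow_succ, ← Nat.div_mul_cancel hdvd, hc]
        ring
      simp only [decide_eq_true_eq]
      omega
    -- x - 2K = 2^(i+1)*(q-1) + 2^i + 2m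
    have hq : x = 2 ^ (i + 1) * (x / 2 ^ (i + 1)) + 2 ^ i := by
      conv_lhs => rw [← Nat.div_add_mod x (2 ^ (i + 1))]
      omega
    have hp : (2:ℕ) ^ (i + 1) = 2 * 2 ^ i := by ring
    have hqpos : 1 ≤ x / 2 ^ (i + 1) := by
      rw [Nat.le_div_iff_mul_le (by positivity)]; omega
    obtain ⟨s, hs⟩ : ∃ s, x / 2 ^ (i + 1) = s + 1 :=
      ⟨x / 2 ^ (i + 1) - 1, by omega⟩
    rw [hs] at hq
    have hmul : 2 ^ (i + 1) * (s + 1) = 2 ^ (i + 1) * s + 2 ^ (i + 1) := by ring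
    have hsub : x - 2 * K = 2 ^ (i + 1) * s + 2 ^ i + 2 * m := by omega
    -- 2^(t+1) divides x - 2K
    have hdvd2 : 2 ^ (t + 1) ∣ x - 2 * K := by
      rw [hsub]
      refine Nat.dvd_add (Nat.dvd_add ?_ ?_) ?_
      · exact Dvd.dvd.mul_right (pow_dvd_pow 2 (by omega)) _
      · exact pow_dvd_pow 2 (by omega)
      · obtain ⟨d, hd⟩ := hdvd
        exact ⟨d, by rw [pow_succ, hd]; ring⟩
    -- hence bit t of x - 2K is 0
    have hbx : (x - 2 * K).testBit t = false := by
      rw [Nat.testBit_eq_decide_div_mod_eq]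
      obtain ⟨d, hd⟩ := hdvd2
      rw [pow_succ] at hd
      simp only [decide_eq_false_iff_not]
      rw [hd, Nat.mul_assoc, Nat.mul_div_cancel_left _ (Nat.pow_pos (n := t) (by norm_num))]
      omega
    -- contradiction with hcont
    have := congrArg (fun n => n.testBit t) hcont
    simp only [Nat.testBit_and, hbm, hbx, Bool.and_false] at this
    exact Bool.false_ne_true this
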